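/- Let p be a prime and R = 𝔽_p[x^{±1}, y^{±1}]. Let I = (x−1, y−1) be the augmentation ideal, let f₁ : I → R be the additive map sending s = p(x)(x−1) + q(y)(y−1) + r(x,y)(x−1)(y−1) (unique such decomposition with p ∈ 𝔽_p[x], q ∈ 𝔽_p[y], r ∈ 𝔽_p[x,y], after clearing denominators) to q(y), and let σ be the automorphism of R with σ(x)=y, σ(y)=xy. Then there is no nonzero ideal J of R with J ⊆ I, σ(J) = J, and f₁(J) ⊆ J. -/

import Mathlib

/-- The Laurent polynomial ring `R = 𝔽_p[x^{±1}, y^{±1}]`. -/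
abbrev LaurentP (p : ℕ) := AddMonoidAlgebra (ZMod p) (ℤ × ℤ)

/-- The variable `x`. -/
noncomputable def lx (p : ℕ) : LaurentP p := AddMonoidAlgebra.single (1, 0) 1
/-- The variable `x⁻¹`. -/
noncomputable def lxinv (p : ℕ) : LaurentP p := AddMonoidAlgebra.single (-1, 0) 1
/-- The variable `y`. -/
noncomputable def ly (p : ℕ) : LaurentP p := AddMonoidAlgebra.single (0, 1) 1
/-- The variable `y⁻¹`. -/
noncomputable def lyinv (p : ℕ) : LaurentP p := AddMonoidAlgebra.single (0, -1) 1

/-- The automorphism `(a,b) ↦ (b, a+b)` of `ℤ²`, inducing `x ↦ y`, `y ↦ xy`. -/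
def fibAut : (ℤ × ℤ) ≃+ (ℤ × ℤ) where
  toFun v := (v.2, v.1 + v.2)
  invFun w := (w.2 - w.1, w.1)
  left_inv := by intro v; simp
  right_inv := by intro w; simp
  map_add' := by intro v w; simp [Prod.ext_iff]; ring

/-- The algebra automorphism `σ` of `R` with `σ(x) = y`, `σ(y) = xy`. -/
noncomputable def sigmaP (p : ℕ) : LaurentP p ≃ₐ[ZMod p] LaurentP p :=
  AddMonoidAlgebra.domCongr (ZMod p) (ZMod p) fibAut

/-! ### Auxiliary material -/

/-- The weight function `(a,b) ↦ a+b` on `ℤ²`. -/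
def phiw (v : ℤ × ℤ) : ℤ := v.1 + v.2

lemma single_congr {p : ℕ} {v w : ℤ × ℤ} (c : ZMod p) (h : v = w) :
    (AddMonoidAlgebra.single v c : LaurentP p) = AddMonoidAlgebra.single w c := by rw [h]

lemma key {p : ℕ} (g : ℤ × ℤ) (hg : 0 < phiw g) (t : LaurentP p) (ht : t.coeff.support.Nonempty) :
    ∃ m ∈ ((AddMonoidAlgebra.single g (1 : ZMod p) - 1) * t).coeff.support,
      ∃ m' ∈ ((AddMonoidAlgebra.single g (1 : ZMod p) - 1) * t).coeff.support,
        t.coeff.support.sup' ht phiw + phiw g ≤ phiw m ∧ phiw m' ≤ t.coeff.support.inf' ht phiw := by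
  set s := (AddMonoidAlgebra.single g (1 : ZMod p) - 1) * t with hs
  have hsv : ∀ v, s.coeff v = t.coeff (v - g) - t.coeff v := by
    intro v
    rw [hs, sub_one_mul, AddMonoidAlgebra.coeff_sub, Finsupp.sub_apply,
      AddMonoidAlgebra.coeff_single_mul_apply, one_mul,
      neg_add_eq_sub]
  obtain ⟨u, hu, hueq⟩ := Finset.exists_mem_eq_sup' ht phiw
  obtain ⟨w, hw, hweq⟩ := Finset.exists_mem_eq_inf' ht phiw
  have hphiadd : ∀ a b : ℤ × ℤ, phiw (a + b) = phiw a + phiw b := by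
    intro a b; simp [phiw]; ring
  have hphisub : ∀ a b : ℤ × ℤ, phiw (a - b) = phiw a - phiw b := by
    intro a b; simp [phiw]; ring
  refine ⟨u + g, ?_, w, ?_, ?_, ?_⟩
  · rw [Finsupp.mem_support_iff, hsv, add_sub_cancel_right]
    have h0 : t.coeff (u + g) = 0 := by
      by_contra h
      have := Finset.le_sup' phiw (Finsupp.mem_support_iff.2 h)
      rw [hphiadd] at this
      omega
    rw [h0, sub_zero]
    exact Finsupp.mem_support_iff.1 hu
  · rw [Finsupp.mem_support_iff, hsv]
    have h0 : t.coeff (w - g) = 0 := by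
      by_contra h
      have := Finset.inf'_le phiw (Finsupp.mem_support_iff.2 h)
      rw [hphisub] at this
      omega
    rw [h0, zero_sub, neg_ne_zero]
    exact Finsupp.mem_support_iff.1 hw
  · rw [hueq, hphiadd]
  · rw [hweq]

lemma width_ge {p : ℕ} (g : ℤ × ℤ) (hg : 0 < phiw g) (s t : LaurentP p)
    (hst : s = (AddMonoidAlgebra.single g (1 : ZMod p) - 1) * t) (ht : t.coeff.support.Nonempty) :
    ∃ hsn : s.coeff.support.Nonempty,
      t.coeff.support.sup' ht phiw + phiw g ≤ s.coeff.support.sup' hsn phiw ∧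
      s.coeff.support.inf' hsn phiw ≤ t.coeff.support.inf' ht phiw := by
  obtain ⟨m, hm, m', hm', h1, h2⟩ := key g hg t ht
  rw [← hst] at hm hm'
  exact ⟨⟨m, hm⟩, le_trans h1 (Finset.le_sup' phiw hm),
    le_trans (Finset.inf'_le phiw hm') h2⟩

lemma single_x_mem (p : ℕ) (a : ℤ) :
    AddMonoidAlgebra.single ((a, 0) : ℤ × ℤ) (1 : ZMod p) ∈
      Algebra.adjoin (ZMod p) ({lx p, lxinv p} : Set (LaurentP p)) := by
  induction a using Int.induction_on with
  | zero => rw [show ((0, 0) : ℤ × ℤ) = 0 from rfl, ← AddMonoidAlgebra.one_def]; exact one_mem _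
  | succ a ih =>
    have h : AddMonoidAlgebra.single ((a + 1, 0) : ℤ × ℤ) (1 : ZMod p) =
        AddMonoidAlgebra.single ((a, 0) : ℤ × ℤ) (1 : ZMod p) * lx p := by
      rw [lx, AddMonoidAlgebra.single_mul_single, mul_one]
      exact single_congr _ (by simp)
    rw [h]; exact mul_mem ih (Algebra.subset_adjoin (by simp))
  | pred a ih =>
    have h : AddMonoidAlgebra.single ((-a - 1, 0) : ℤ × ℤ) (1 : ZMod p) =
        AddMonoidAlgebra.single ((-a, 0) : ℤ × ℤ) (1 : ZMod p) * lxinv p := by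
      rw [lxinv, AddMonoidAlgebra.single_mul_single, mul_one]
      exact single_congr _ (by simp [Prod.ext_iff]; ring)
    rw [h]; exact mul_mem ih (Algebra.subset_adjoin (by simp))

lemma single_y_mem (p : ℕ) (b : ℤ) :
    AddMonoidAlgebra.single ((0, b) : ℤ × ℤ) (1 : ZMod p) ∈
      Algebra.adjoin (ZMod p) ({ly p, lyinv p} : Set (LaurentP p)) := by
  induction b using Int.induction_on with
  | zero => rw [show ((0, 0) : ℤ × ℤ) = 0 from rfl, ← AddMonoidAlgebra.one_def]; exact one_mem _
  | succ b ih =>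
    have h : AddMonoidAlgebra.single ((0, b + 1) : ℤ × ℤ) (1 : ZMod p) =
        AddMonoidAlgebra.single ((0, b) : ℤ × ℤ) (1 : ZMod p) * ly p := by
      rw [ly, AddMonoidAlgebra.single_mul_single, mul_one]
      exact single_congr _ (by simp)
    rw [h]; exact mul_mem ih (Algebra.subset_adjoin (by simp))
  | pred b ih =>
    have h : AddMonoidAlgebra.single ((0, -b - 1) : ℤ × ℤ) (1 : ZMod p) =
        AddMonoidAlgebra.single ((0, -b) : ℤ × ℤ) (1 : ZMod p) * lyinv p := by
      rw [lyinv, AddMonoidAlgebra.single_mul_single, mul_one]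
      exact single_congr _ (by simp [Prod.ext_iff]; ring)
    rw [h]; exact mul_mem ih (Algebra.subset_adjoin (by simp))

/-- The augmentation map. -/
noncomputable def epsP (p : ℕ) : LaurentP p →ₐ[ZMod p] ZMod p :=
  AddMonoidAlgebra.lift (ZMod p) (ZMod p) (ℤ × ℤ) 1

lemma epsP_single (p : ℕ) (v : ℤ × ℤ) (c : ZMod p) :
    epsP p (AddMonoidAlgebra.single v c) = c := by
  simp [epsP, AddMonoidAlgebra.lift_single]

lemma div_y (p : ℕ) : ∀ Q ∈ Algebra.adjoin (ZMod p) ({ly p, lyinv p} : Set (LaurentP p)),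
    ∃ Q₁ ∈ Algebra.adjoin (ZMod p) ({ly p, lyinv p} : Set (LaurentP p)),
      Q - algebraMap (ZMod p) (LaurentP p) (epsP p Q) = Q₁ * (ly p - 1) := by
  intro Q hQ
  induction hQ using Algebra.adjoin_induction with
  | mem x hx =>
    have hinv : lyinv p * ly p = 1 := by
      rw [lyinv, ly, AddMonoidAlgebra.single_mul_single, mul_one, AddMonoidAlgebra.one_def]
      exact single_congr _ (by simp)
    rcases hx with h | h
    · subst h
      refine ⟨1, one_mem _, ?_⟩
      have he : epsP p (ly p) = 1 := by rw [ly, epsP_single]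
      rw [he, map_one, one_mul]
    · simp only [Set.mem_singleton_iff] at h
      subst h
      refine ⟨-lyinv p, neg_mem (Algebra.subset_adjoin (by simp)), ?_⟩
      have he : epsP p (lyinv p) = 1 := by rw [lyinv, epsP_single]
      rw [he, map_one]
      linear_combination hinv
  | algebraMap r =>
    exact ⟨0, zero_mem _, by simp [epsP_single]⟩
  | add x y hx hy ihx ihy =>
    obtain ⟨Qx, hQx, ex⟩ := ihx
    obtain ⟨Qy, hQy, ey⟩ := ihy
    refine ⟨Qx + Qy, add_mem hQx hQy, ?_⟩
    rw [map_add, map_add]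
    linear_combination ex + ey
  | mul x y hx hy ihx ihy =>
    obtain ⟨Qx, hQx, ex⟩ := ihx
    obtain ⟨Qy, hQy, ey⟩ := ihy
    refine ⟨x * Qy + algebraMap (ZMod p) (LaurentP p) (epsP p y) * Qx,
      add_mem (mul_mem hx hQy) (mul_mem (Subalgebra.algebraMap_mem _ _) hQx), ?_⟩
    rw [map_mul, map_mul]
    linear_combination x * ey + algebraMap (ZMod p) (LaurentP p) (epsP p y) * ex

lemma single_y_sub (p : ℕ) (b : ℤ) :
    ∃ h : LaurentP p,
      AddMonoidAlgebra.single ((0, b) : ℤ × ℤ) (1 : ZMod p) - 1 = h * (ly p - 1) := by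
  obtain ⟨Q₁, _, hq⟩ := div_y p _ (single_y_mem p b)
  rw [epsP_single, map_one] at hq
  exact ⟨Q₁, hq⟩

lemma single_x_sub (p : ℕ) (a : ℤ) :
    ∃ h : LaurentP p,
      AddMonoidAlgebra.single ((a, 0) : ℤ × ℤ) (1 : ZMod p) - 1 = h * (lx p - 1) := by
  induction a using Int.induction_on with
  | zero =>
    exact ⟨0, by rw [show ((0, 0) : ℤ × ℤ) = 0 from rfl, ← AddMonoidAlgebra.one_def]; simp⟩
  | succ a ih =>
    obtain ⟨h, hh⟩ := ih
    refine ⟨AddMonoidAlgebra.single ((a, 0) : ℤ × ℤ) (1 : ZMod p) + h, ?_⟩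
    have e : AddMonoidAlgebra.single ((a + 1, 0) : ℤ × ℤ) (1 : ZMod p) =
        AddMonoidAlgebra.single ((a, 0) : ℤ × ℤ) (1 : ZMod p) * lx p := by
      rw [lx, AddMonoidAlgebra.single_mul_single, mul_one]
      exact single_congr _ (by simp)
    rw [e]; linear_combination hh
  | pred a ih =>
    obtain ⟨h, hh⟩ := ih
    have hinv : lxinv p * lx p = 1 := by
      rw [lxinv, lx, AddMonoidAlgebra.single_mul_single, mul_one, AddMonoidAlgebra.one_def]
      exact single_congr _ (by simp)
    refine ⟨-AddMonoidAlgebra.single ((-a, 0) : ℤ × ℤ) (1 : ZMod p) * lxinv p + h, ?_⟩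
    have e : AddMonoidAlgebra.single ((-a - 1, 0) : ℤ × ℤ) (1 : ZMod p) =
        AddMonoidAlgebra.single ((-a, 0) : ℤ × ℤ) (1 : ZMod p) * lxinv p := by
      rw [lxinv, AddMonoidAlgebra.single_mul_single, mul_one]
      exact single_congr _ (by simp [Prod.ext_iff]; ring)
    rw [e]
    linear_combination hh + AddMonoidAlgebra.single ((-a, 0) : ℤ × ℤ) (1 : ZMod p) * hinv

lemma decomp_x (p : ℕ) (u : LaurentP p) :
    ∃ P ∈ Algebra.adjoin (ZMod p) ({lx p, lxinv p} : Set (LaurentP p)),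
      ∃ w : LaurentP p, u = P + w * (ly p - 1) := by
  induction u using AddMonoidAlgebra.induction with
  | zero => exact ⟨0, zero_mem _, 0, by simp⟩
  | single_add v c f hvf hc ih =>
    obtain ⟨P, hP, w, hw⟩ := ih
    obtain ⟨h, hh⟩ := single_y_sub p v.2
    have hsingle : (AddMonoidAlgebra.single v c : LaurentP p) =
        AddMonoidAlgebra.single ((v.1, 0) : ℤ × ℤ) c *
          AddMonoidAlgebra.single ((0, v.2) : ℤ × ℤ) (1 : ZMod p) := by
      rw [AddMonoidAlgebra.single_mul_single, mul_one]
      exact single_congr _ (by simp)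
    have hmem : AddMonoidAlgebra.single ((v.1, 0) : ℤ × ℤ) c ∈
        Algebra.adjoin (ZMod p) ({lx p, lxinv p} : Set (LaurentP p)) := by
      have hs : AddMonoidAlgebra.single ((v.1, 0) : ℤ × ℤ) c =
          c • AddMonoidAlgebra.single ((v.1, 0) : ℤ × ℤ) (1 : ZMod p) := by
        rw [AddMonoidAlgebra.smul_single, smul_eq_mul, mul_one]
      rw [hs]
      exact Subalgebra.smul_mem _ (single_x_mem p v.1) c
    refine ⟨AddMonoidAlgebra.single ((v.1, 0) : ℤ × ℤ) c + P, add_mem hmem hP,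
      AddMonoidAlgebra.single ((v.1, 0) : ℤ × ℤ) c * h + w, ?_⟩
    linear_combination hw + hsingle + AddMonoidAlgebra.single ((v.1, 0) : ℤ × ℤ) c * hh

lemma decomp_y (p : ℕ) (u : LaurentP p) :
    ∃ Q ∈ Algebra.adjoin (ZMod p) ({ly p, lyinv p} : Set (LaurentP p)),
      ∃ w : LaurentP p, u = Q + w * (lx p - 1) := by
  induction u using AddMonoidAlgebra.induction with
  | zero => exact ⟨0, zero_mem _, 0, by simp⟩
  | single_add v c f hvf hc ih =>
    obtain ⟨Q, hQ, w, hw⟩ := ih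
    obtain ⟨h, hh⟩ := single_x_sub p v.1
    have hsingle : (AddMonoidAlgebra.single v c : LaurentP p) =
        AddMonoidAlgebra.single ((0, v.2) : ℤ × ℤ) c *
          AddMonoidAlgebra.single ((v.1, 0) : ℤ × ℤ) (1 : ZMod p) := by
      rw [AddMonoidAlgebra.single_mul_single, mul_one]
      exact single_congr _ (by simp)
    have hmem : AddMonoidAlgebra.single ((0, v.2) : ℤ × ℤ) c ∈
        Algebra.adjoin (ZMod p) ({ly p, lyinv p} : Set (LaurentP p)) := by
      have hs : AddMonoidAlgebra.single ((0, v.2) : ℤ × ℤ) c =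
          c • AddMonoidAlgebra.single ((0, v.2) : ℤ × ℤ) (1 : ZMod p) := by
        rw [AddMonoidAlgebra.smul_single, smul_eq_mul, mul_one]
      rw [hs]
      exact Subalgebra.smul_mem _ (single_y_mem p v.2) c
    refine ⟨AddMonoidAlgebra.single ((0, v.2) : ℤ × ℤ) c + Q, add_mem hmem hQ,
      AddMonoidAlgebra.single ((0, v.2) : ℤ × ℤ) c * h + w, ?_⟩
    linear_combination hw + hsingle + AddMonoidAlgebra.single ((0, v.2) : ℤ × ℤ) c * hh

lemma eps_span (p : ℕ) : ∀ a ∈ Ideal.span ({lx p - 1, ly p - 1} : Set (LaurentP p)),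
    epsP p a = 0 := by
  intro a ha
  obtain ⟨u, v, huv⟩ := Ideal.mem_span_pair.1 ha
  have h1 : epsP p (lx p - 1) = 0 := by rw [map_sub, lx, epsP_single, map_one, sub_self]
  have h2 : epsP p (ly p - 1) = 0 := by rw [map_sub, ly, epsP_single, map_one, sub_self]
  rw [← huv, map_add, map_mul, map_mul, h1, h2, mul_zero, mul_zero, add_zero]

lemma fibAut_apply (v : ℤ × ℤ) : fibAut v = (v.2, v.1 + v.2) := rfl

lemma fib_bound : ∀ n : ℕ, 0 ≤ (fibAut^[n + 1] ((1, 0) : ℤ × ℤ)).1 ∧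
    1 ≤ (fibAut^[n + 1] ((1, 0) : ℤ × ℤ)).2 ∧
    ((n : ℤ) + 1) ≤ phiw (fibAut^[n + 1] ((1, 0) : ℤ × ℤ)) := by
  intro n
  induction n with
  | zero => simp [fibAut_apply, phiw]
  | succ n ih =>
    rw [Function.iterate_succ_apply', fibAut_apply]
    simp only [phiw] at ih ⊢
    push_cast
    omega

/-- Let `I = (x−1, y−1)` be the augmentation ideal of `R = 𝔽_p[x^{±1},y^{±1}]`,
`f₁` the additive map sending `s = P(x)(x−1) + Q(y)(y−1) + r(x,y)(x−1)(y−1)`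
(with `P` a Laurent polynomial in `x` only, `Q` in `y` only; such a decomposition is
unique) to `Q`, and `σ` the automorphism with `σ(x)=y`, `σ(y)=xy`.  Then there is no
nonzero ideal `J` of `R` with `J ⊆ I`, `σ(J) = J` and `f₁(J) ⊆ J`. -/
theorem stmt13 (p : ℕ) [Fact p.Prime]
    (f₁ : LaurentP p →+ LaurentP p)
    (hf₁ : ∀ P ∈ Algebra.adjoin (ZMod p) ({lx p, lxinv p} : Set (LaurentP p)),
      ∀ Q ∈ Algebra.adjoin (ZMod p) ({ly p, lyinv p} : Set (LaurentP p)),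
      ∀ r : LaurentP p,
        f₁ (P * (lx p - 1) + Q * (ly p - 1) + r * (lx p - 1) * (ly p - 1)) = Q) :
    ¬∃ J : Ideal (LaurentP p), J ≠ ⊥ ∧
      (J : Set (LaurentP p)) ⊆
        (Ideal.span ({lx p - 1, ly p - 1} : Set (LaurentP p)) : Ideal (LaurentP p)) ∧
      (⇑(sigmaP p) '' (J : Set (LaurentP p)) = (J : Set (LaurentP p))) ∧
      (∀ a ∈ J, f₁ a ∈ J) := by
  rintro ⟨J, hJne, hJI, hσ, hf⟩
  -- Step A2 : any element of `J` which is a Laurent polynomial in `y` alone is zero.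
  have hQ0 : ∀ Q, Q ∈ J →
      Q ∈ Algebra.adjoin (ZMod p) ({ly p, lyinv p} : Set (LaurentP p)) → Q = 0 := by
    have claim : ∀ n : ℕ, ∀ Q : LaurentP p, Q ∈ J →
        Q ∈ Algebra.adjoin (ZMod p) ({ly p, lyinv p} : Set (LaurentP p)) →
        ∀ hQn : Q.coeff.support.Nonempty,
          (Q.coeff.support.sup' hQn phiw - Q.coeff.support.inf' hQn phiw).toNat < n → False := by
      intro n
      induction n with
      | zero => intro Q _ _ _ h; omega
      | succ n ih =>
        intro Q hQJ hQy hQn hQw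
        have hε : epsP p Q = 0 := eps_span p Q (hJI hQJ)
        obtain ⟨Q₁, hQ₁y, hQ₁⟩ := div_y p Q hQy
        rw [hε, map_zero, sub_zero] at hQ₁
        have harg : (0 : LaurentP p) * (lx p - 1) + Q₁ * (ly p - 1) +
            0 * (lx p - 1) * (ly p - 1) = Q := by rw [hQ₁]; ring
        have hfQ : f₁ Q = Q₁ := by
          have h := hf₁ 0 (zero_mem _) Q₁ hQ₁y 0
          rwa [harg] at h
        have hQ₁J : Q₁ ∈ J := hfQ ▸ hf Q hQJ
        have hQ₁ne : Q₁ ≠ 0 := by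
          rintro rfl
          rw [zero_mul] at hQ₁
          obtain ⟨v, hv⟩ := hQn
          rw [hQ₁] at hv
          simp at hv
        have hQ₁n : Q₁.coeff.support.Nonempty := Finsupp.support_nonempty_iff.2 (by simpa using hQ₁ne)
        have hQeq : Q = (AddMonoidAlgebra.single ((0, 1) : ℤ × ℤ) (1 : ZMod p) - 1) * Q₁ := by
          rw [hQ₁, show (AddMonoidAlgebra.single ((0, 1) : ℤ × ℤ) (1 : ZMod p)) = ly p from rfl,
            mul_comm]
        obtain ⟨hsn, h1, h2⟩ :=
          width_ge ((0, 1) : ℤ × ℤ) (by norm_num [phiw]) Q Q₁ hQeq hQ₁n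
        have hre : Q.coeff.support.sup' hsn phiw = Q.coeff.support.sup' hQn phiw := rfl
        have hre' : Q.coeff.support.inf' hsn phiw = Q.coeff.support.inf' hQn phiw := rfl
        rw [hre] at h1
        rw [hre'] at h2
        have h3 : Q₁.coeff.support.inf' hQ₁n phiw ≤ Q₁.coeff.support.sup' hQ₁n phiw := by
          obtain ⟨v, hv⟩ := hQ₁n
          exact le_trans (Finset.inf'_le phiw hv) (Finset.le_sup' phiw hv)
        have hphig : phiw ((0, 1) : ℤ × ℤ) = 1 := by norm_num [phiw]
        rw [hphig] at h1
        exact ih Q₁ hQ₁J hQ₁y hQ₁n (by omega)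
    intro Q hQJ hQy
    by_contra hne
    have hn : Q.coeff.support.Nonempty := Finsupp.support_nonempty_iff.2 (by simpa using hne)
    exact claim ((Q.coeff.support.sup' hn phiw - Q.coeff.support.inf' hn phiw).toNat + 1) Q hQJ hQy hn
      (lt_add_one _)
  -- Step A : `J ⊆ (x-1)R`.
  have hJx : ∀ a ∈ J, ∃ t : LaurentP p,
      a = (AddMonoidAlgebra.single ((1, 0) : ℤ × ℤ) (1 : ZMod p) - 1) * t := by
    intro a haJ
    obtain ⟨u, v, huv⟩ := Ideal.mem_span_pair.1 (hJI haJ)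
    obtain ⟨P, hP, w, hw⟩ := decomp_x p u
    obtain ⟨Q, hQ, w', hw'⟩ := decomp_y p v
    have hdec : a = P * (lx p - 1) + Q * (ly p - 1) + (w' + w) * (lx p - 1) * (ly p - 1) := by
      rw [← huv, hw, hw']; ring
    have hfa : f₁ a = Q := by rw [hdec]; exact hf₁ P hP Q hQ (w' + w)
    have hQJ : Q ∈ J := hfa ▸ hf a haJ
    have hQz : Q = 0 := hQ0 Q hQJ hQ
    refine ⟨P + (w' + w) * (ly p - 1), ?_⟩
    have hlx : (AddMonoidAlgebra.single ((1, 0) : ℤ × ℤ) (1 : ZMod p)) = lx p := rfl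
    rw [hlx, hdec, hQz]
    ring
  -- Step B : `J ⊆ (σⁿ(x)-1)R` for every `n`.
  have hiter : ∀ n : ℕ, ∀ a ∈ J, ∃ t : LaurentP p,
      a = (AddMonoidAlgebra.single (fibAut^[n] ((1, 0) : ℤ × ℤ)) (1 : ZMod p) - 1) * t := by
    intro n
    induction n with
    | zero => simpa using hJx
    | succ n ih =>
      intro a haJ
      have himg : a ∈ ⇑(sigmaP p) '' (J : Set (LaurentP p)) := by
        rw [hσ]; exact haJ
      obtain ⟨b, hbJ, hba⟩ := himg
      obtain ⟨t, hbt⟩ := ih b hbJ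
      refine ⟨sigmaP p t, ?_⟩
      rw [← hba, hbt, map_mul, map_sub, map_one, Function.iterate_succ_apply']
      congr 1
      simp [sigmaP]
  -- Conclusion.
  obtain ⟨s, hsJ, hsne⟩ := Submodule.exists_mem_ne_zero_of_ne_bot hJne
  have hsn : s.coeff.support.Nonempty := Finsupp.support_nonempty_iff.2 (by simpa using hsne)
  set W := (s.coeff.support.sup' hsn phiw - s.coeff.support.inf' hsn phiw).toNat with hW
  obtain ⟨t, hst⟩ := hiter (W + 1) s hsJ
  have htne : t ≠ 0 := by rintro rfl; rw [mul_zero] at hst; exact hsne hst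
  have htn : t.coeff.support.Nonempty := Finsupp.support_nonempty_iff.2 (by simpa using htne)
  obtain ⟨hb1, hb2, hb3⟩ := fib_bound W
  have hpos : 0 < phiw (fibAut^[W + 1] ((1, 0) : ℤ × ℤ)) := by omega
  obtain ⟨hsn', h1, h2⟩ := width_ge _ hpos s t hst htn
  have hre : s.coeff.support.sup' hsn' phiw = s.coeff.support.sup' hsn phiw := rfl
  have hre' : s.coeff.support.inf' hsn' phiw = s.coeff.support.inf' hsn phiw := rfl
  rw [hre] at h1
  rw [hre'] at h2
  have h3 : t.coeff.support.inf' htn phiw ≤ t.coeff.support.sup' htn phiw := by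
    obtain ⟨v, hv⟩ := htn
    exact le_trans (Finset.inf'_le phiw hv) (Finset.le_sup' phiw hv)
  omega
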